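/- For an analytic function Θ(z) := g'(z)·z − g(z) − 2·g(z)·f'(z)·z/f(z), where f(z) = (1 − e^{−z})/z and g(z) = 1 − sinh(z)/z, the symmetrization satisfies (Θ(z) + Θ(−z))/2 = 2·(sinh(z/2) − (z/2)·cosh(z/2))/sinh(z/2). -/

import Mathlib

/-- `f(z) = (1 - e^{-z})/z`. -/
noncomputable def fFun (x : ℝ) : ℝ := (1 - Real.exp (-x)) / x

/-- `g(z) = 1 - sinh(z)/z`. -/
noncomputable def gFun (x : ℝ) : ℝ := 1 - Real.sinh x / x

/-- `Θ(z) = g'(z)·z - g(z) - 2·g(z)·f'(z)·z/f(z)`. -/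
noncomputable def Theta (x : ℝ) : ℝ :=
  deriv gFun x * x - gFun x - 2 * gFun x * deriv fFun x * x / fFun x

lemma deriv_fFun (x : ℝ) (hx : x ≠ 0) :
    deriv fFun x = (Real.exp (-x) * x - (1 - Real.exp (-x))) / x ^ 2 := by
  have h0 : HasDerivAt (fun y : ℝ => Real.exp (-y)) (-Real.exp (-x)) x := by
    simpa [Function.comp_def] using (Real.hasDerivAt_exp (-x)).comp x ((hasDerivAt_id x).neg)
  have h1 : HasDerivAt (fun y : ℝ => 1 - Real.exp (-y)) (Real.exp (-x)) x := by
    simpa using h0.const_sub 1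
  have h2 : HasDerivAt fFun
      ((Real.exp (-x) * x - (1 - Real.exp (-x)) * 1) / x ^ 2) x :=
    h1.div (hasDerivAt_id x) hx
  simpa using h2.deriv

lemma deriv_gFun (x : ℝ) (hx : x ≠ 0) :
    deriv gFun x = -((Real.cosh x * x - Real.sinh x) / x ^ 2) := by
  have h1 : HasDerivAt (fun y : ℝ => Real.sinh y / y)
      ((Real.cosh x * x - Real.sinh x * 1) / x ^ 2) x :=
    (Real.hasDerivAt_sinh x).div (hasDerivAt_id x) hx
  have h2 : HasDerivAt gFun (-((Real.cosh x * x - Real.sinh x * 1) / x ^ 2)) x := by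
    exact h1.const_sub 1
  simpa using h2.deriv

theorem stmt_16 (z : ℝ) (hz : z ≠ 0) (hsinh : Real.sinh (z / 2) ≠ 0)
    (hf : fFun z ≠ 0) :
    (Theta z + Theta (-z)) / 2 =
      2 * (Real.sinh (z / 2) - (z / 2) * Real.cosh (z / 2)) /
        Real.sinh (z / 2) := by
  have hz' : (-z : ℝ) ≠ 0 := neg_ne_zero.mpr hz
  set t : ℝ := Real.exp (z / 2) with ht_def
  have ht : t ≠ 0 := (Real.exp_pos _).ne'
  have hez : Real.exp z = t ^ 2 := by
    rw [ht_def, ← Real.exp_nat_mul]; ring_nf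
  have henz : Real.exp (-z) = (t ^ 2)⁻¹ := by
    rw [Real.exp_neg, hez]
  have hsh2 : Real.sinh (z / 2) = (t ^ 2 - 1) / (2 * t) := by
    rw [Real.sinh_eq, ← ht_def, Real.exp_neg]
    field_simp
    ring
  have hch2 : Real.cosh (z / 2) = (t ^ 2 + 1) / (2 * t) := by
    rw [Real.cosh_eq, ← ht_def, Real.exp_neg]
    field_simp
    ring
  have hsh : Real.sinh z = (t ^ 4 - 1) / (2 * t ^ 2) := by
    rw [Real.sinh_eq, hez, Real.exp_neg, hez]
    field_simp
  have hch : Real.cosh z = (t ^ 4 + 1) / (2 * t ^ 2) := by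
    rw [Real.cosh_eq, hez, Real.exp_neg, hez]
    field_simp
  have ht2 : t ^ 2 - 1 ≠ 0 := by
    intro h
    apply hsinh
    rw [hsh2, h, zero_div]
  have hf' : 1 - (t ^ 2)⁻¹ ≠ 0 := by
    intro h
    apply hf
    rw [fFun, henz, h, zero_div]
  have hf2 : fFun (-z) ≠ 0 := by
    rw [fFun, neg_neg, hez]
    intro h
    rcases div_eq_zero_iff.mp h with h' | h'
    · exact ht2 (by linarith [h'])
    · exact hz' h'
  rw [Theta, Theta, deriv_fFun z hz, deriv_fFun (-z) hz', deriv_gFun z hz,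
    deriv_gFun (-z) hz']
  rw [fFun, fFun, gFun, gFun, Real.sinh_neg, Real.cosh_neg, neg_neg]
  rw [hez, henz, hsh, hch, hsh2, hch2]
  have hfz' : (1 - (t ^ 2)⁻¹) / z ≠ 0 := div_ne_zero hf' hz
  have hfz2 : (1 - t ^ 2) / (-z) ≠ 0 := by
    rw [div_ne_zero_iff]
    constructor
    · intro h; exact ht2 (by linarith)
    · exact hz'
  have e1 : (1 - (t ^ 2)⁻¹) / z = (t ^ 2 - 1) / (t ^ 2 * z) := by
    field_simp
  have e2 : (1 - t ^ 2) / (-z) = (t ^ 2 - 1) / z := by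
    rw [div_neg]
    ring
  rw [e1, e2]
  field_simp
  ring
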